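/- Let r be a positive odd integer not divisible by 3. In the triangle group Δ(2,3,r) (with generators a, b, c), let y = c^((r+3)/2) * a * c^(-(r+3)/2) * a. Then the quotient of Δ(2,3,r) by the normal closure of {y} is abelian; equivalently, the commutator subgroup ⁅(⊤ : Subgroup Δ(2,3,r)), (⊤ : Subgroup Δ(2,3,r))⁆ is contained in Subgroup.normalClosure {y}. -/

import Mathlib

/-- Generators of the triangle group. -/
inductive TriGen : Type
  | a | b | c

/-- Relators of the triangle group Δ(p,q,r): aᵖ, bᵠ, cʳ, abc. -/
def triangleRels (p q r : ℕ) : Set (FreeGroup TriGen) :=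
  {FreeGroup.of TriGen.a ^ p, FreeGroup.of TriGen.b ^ q, FreeGroup.of TriGen.c ^ r,
    FreeGroup.of TriGen.a * FreeGroup.of TriGen.b * FreeGroup.of TriGen.c}

/-- The triangle group Δ(p,q,r), presented with generators a, b, c and
relators aᵖ, bᵠ, cʳ, abc. -/
abbrev TriangleGroup (p q r : ℕ) := PresentedGroup (triangleRels p q r)

/-- The image of the generator `a` in Δ(p,q,r). -/
def ta (p q r : ℕ) : TriangleGroup p q r := PresentedGroup.of TriGen.a

/-- The image of the generator `b` in Δ(p,q,r). -/
def tb (p q r : ℕ) : TriangleGroup p q r := PresentedGroup.of TriGen.b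

/-- The image of the generator `c` in Δ(p,q,r). -/
def tc (p q r : ℕ) : TriangleGroup p q r := PresentedGroup.of TriGen.c

lemma rel_eq_one (p q r : ℕ) {w : FreeGroup TriGen} (hw : w ∈ triangleRels p q r) :
    PresentedGroup.mk (triangleRels p q r) w = 1 := by
  apply (QuotientGroup.eq_one_iff _).2
  exact Subgroup.subset_normalClosure hw

lemma ta_sq (p q r : ℕ) : ta p q r ^ p = 1 := by
  have := rel_eq_one p q r (w := FreeGroup.of TriGen.a ^ p) (by left; rfl)
  simpa [ta, PresentedGroup.of] using this

lemma tc_pow (p q r : ℕ) : tc p q r ^ r = 1 := by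
  have := rel_eq_one p q r (w := FreeGroup.of TriGen.c ^ r)
    (by right; right; left; rfl)
  simpa [tc, PresentedGroup.of] using this

lemma tabc (p q r : ℕ) : ta p q r * tb p q r * tc p q r = 1 := by
  have := rel_eq_one p q r
    (w := FreeGroup.of TriGen.a * FreeGroup.of TriGen.b * FreeGroup.of TriGen.c)
    (by right; right; right; rfl)
  simpa [ta, tb, tc, PresentedGroup.of] using this

/-- For r a positive odd integer not divisible by 3, the quotient of Δ(2,3,r) by the
normal closure of y = c^((r+3)/2) * a * c^(-(r+3)/2) * a is abelian; equivalently, the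
commutator subgroup of Δ(2,3,r) is contained in the normal closure of {y}. -/
theorem commutator_le_normalClosure_roll_spun_element
    (r : ℕ) (hr : 0 < r) (hodd : Odd r) (h3 : ¬ (3 ∣ r)) :
    ⁅(⊤ : Subgroup (TriangleGroup 2 3 r)), (⊤ : Subgroup (TriangleGroup 2 3 r))⁆ ≤
      Subgroup.normalClosure
        {tc 2 3 r ^ ((r + 3) / 2) * ta 2 3 r * (tc 2 3 r ^ ((r + 3) / 2))⁻¹ * ta 2 3 r} := by
  set k := (r + 3) / 2 with hk
  set N := Subgroup.normalClosure
      {tc 2 3 r ^ k * ta 2 3 r * (tc 2 3 r ^ k)⁻¹ * ta 2 3 r} with hN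
  set f : TriangleGroup 2 3 r →* (TriangleGroup 2 3 r) ⧸ N := QuotientGroup.mk' N with hf
  set A := f (ta 2 3 r) with hA
  set B := f (tb 2 3 r) with hB
  set C := f (tc 2 3 r) with hC
  -- relations in the quotient
  have hA2 : A ^ 2 = 1 := by rw [hA, ← map_pow, ta_sq, map_one]
  have hCr : C ^ r = 1 := by rw [hC, ← map_pow, tc_pow, map_one]
  have hABC : A * B * C = 1 := by rw [hA, hB, hC, ← map_mul, ← map_mul, tabc, map_one]
  have hy : C ^ k * A * (C ^ k)⁻¹ * A = 1 := by
    have : f (tc 2 3 r ^ k * ta 2 3 r * (tc 2 3 r ^ k)⁻¹ * ta 2 3 r) = 1 := by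
      apply (QuotientGroup.eq_one_iff _).2
      exact Subgroup.subset_normalClosure rfl
    simpa using this
  have hAinv : A⁻¹ = A := by
    rw [← mul_eq_one_iff_inv_eq, ← pow_two, hA2]
  -- A commutes with C^k
  have hcomm_k : Commute A (C ^ k) := by
    have h1 : C ^ k * A * (C ^ k)⁻¹ = A⁻¹ := mul_eq_one_iff_eq_inv.mp hy
    rw [hAinv] at h1
    have h2 : C ^ k * A = A * C ^ k := by
      calc C ^ k * A = (C ^ k * A * (C ^ k)⁻¹) * C ^ k := by group
        _ = A * C ^ k := by rw [h1]
    exact h2.symm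
  -- hence with C^(2k) = C^(r+3) = C^3
  have h2k : 2 * k = r + 3 := by
    rw [hk]
    obtain ⟨m, hm⟩ := hodd
    omega
  have hcomm3 : Commute A (C ^ 3) := by
    have : Commute A (C ^ (2 * k)) := by
      rw [mul_comm, pow_mul]
      exact hcomm_k.pow_right 2
    rw [h2k, pow_add, hCr, one_mul] at this
    exact this
  -- and with C^r trivially
  have hcommr : Commute A (C ^ r) := by rw [hCr]; exact Commute.one_right A
  -- Bezout: gcd 3 r = 1
  have hgcd : Nat.Coprime 3 r := by
    rcases (Nat.coprime_or_dvd_of_prime (by norm_num : Nat.Prime 3) r) with h | h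
    · exact h
    · exact absurd h h3
  have hcoprime : IsCoprime (3 : ℤ) (r : ℤ) := by
    exact_mod_cast Nat.isCoprime_iff_coprime.mpr hgcd
  obtain ⟨u, v, huv⟩ := hcoprime
  have hcommC : Commute A C := by
    have : C = (C ^ 3) ^ u * (C ^ r) ^ v := by
      rw [← zpow_natCast C 3, ← zpow_natCast C r, ← zpow_mul, ← zpow_mul,
        ← zpow_add, ← zpow_one C]
      congr 1
      push_cast
      linarith [huv]
    rw [this]
    exact (hcomm3.zpow_right u).mul_right (hcommr.zpow_right v)
  -- B = A⁻¹ * C⁻¹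
  have hBval : B = A⁻¹ * C⁻¹ := by
    have h := hABC
    rw [mul_assoc] at h
    have h2 : B * C = A⁻¹ := eq_inv_of_mul_eq_one_right h
    calc B = (B * C) * C⁻¹ := by group
      _ = A⁻¹ * C⁻¹ := by rw [h2]
  -- all generators commute pairwise
  have hgen : ∀ x y : TriGen, Commute (f (PresentedGroup.of x)) (f (PresentedGroup.of y)) := by
    have hAB : Commute A B := by
      rw [hBval]; exact (Commute.refl A).inv_right.mul_right hcommC.inv_right
    have hCB : Commute C B := by
      rw [hBval]; exact hcommC.symm.inv_right.mul_right (Commute.refl C).inv_right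
    intro x y
    cases x <;> cases y <;>
      first
        | exact Commute.refl _
        | exact hAB | exact hAB.symm
        | exact hcommC | exact hcommC.symm
        | exact hCB | exact hCB.symm
  -- the quotient is commutative
  have htop : Subgroup.closure (Set.range fun x : TriGen => f (PresentedGroup.of x))
      = (⊤ : Subgroup ((TriangleGroup 2 3 r) ⧸ N)) := by
    have : (Set.range fun x : TriGen => f (PresentedGroup.of x))
        = f '' Set.range (PresentedGroup.of : TriGen → TriangleGroup 2 3 r) := by
      rw [← Set.range_comp]; rfl
    rw [this, ← MonoidHom.map_closure, PresentedGroup.closure_range_of,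
      ← MonoidHom.range_eq_map]
    exact MonoidHom.range_eq_top_of_surjective f (QuotientGroup.mk'_surjective N)
  have swap : ∀ (X a : (TriangleGroup 2 3 r) ⧸ N), a * X = X * a → a⁻¹ * X = X * a⁻¹ := by
    intro X a h
    rw [inv_mul_eq_iff_eq_mul, ← mul_assoc, h, mul_assoc, mul_inv_cancel, mul_one]
  have hcenter : ∀ x : TriGen, f (PresentedGroup.of x) ∈
      Subgroup.center ((TriangleGroup 2 3 r) ⧸ N) := by
    intro x
    rw [Subgroup.mem_center_iff]
    intro g
    have hg : g ∈ Subgroup.closure (Set.range fun y : TriGen => f (PresentedGroup.of y)) := by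
      rw [htop]; trivial
    induction hg using Subgroup.closure_induction with
    | mem z hz => obtain ⟨y, rfl⟩ := hz; exact ((hgen x y).symm : _)
    | one => simp
    | mul a b _ _ ha hb => rw [mul_assoc, hb, ← mul_assoc, ha, mul_assoc]
    | inv a _ ha => exact swap _ a ha
  have hcomm : ∀ g h : (TriangleGroup 2 3 r) ⧸ N, g * h = h * g := by
    intro g h
    have hg : g ∈ Subgroup.closure (Set.range fun y : TriGen => f (PresentedGroup.of y)) := by
      rw [htop]; trivial
    induction hg using Subgroup.closure_induction with
    | mem z hz =>
        obtain ⟨y, rfl⟩ := hz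
        exact ((Subgroup.mem_center_iff.1 (hcenter y)) h).symm
    | one => simp
    | mul a b _ _ ha hb => rw [mul_assoc, hb, ← mul_assoc, ha, mul_assoc]
    | inv a _ ha => exact swap h a ha
  -- conclude
  rw [Subgroup.commutator_le]
  intro g _ h _
  refine (QuotientGroup.eq_one_iff _).1 ?_
  open commutatorElement in show f ⁅g, h⁆ = 1
  rw [map_commutatorElement, commutatorElement_def, hcomm (f g) (f h)]
  group
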